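/- Let A : ℝ^n → ℝ^n be measurable with A(ξ)·ξ ≥ 0 for a.e. point, satisfying the homogeneity A(tξ) = |t|^{p-2} t A(ξ) and pointwise convexity of ξ ↦ A(ξ)·ξ. Then for Γ₁, Γ₂ ∈ (L^p(Ω))^n, (∫_Ω A(Γ₁+Γ₂)·(Γ₁+Γ₂) dx)^{1/p} ≤ (∫_Ω A(Γ₁)·Γ₁ dx)^{1/p} + (∫_Ω A(Γ₂)·Γ₂ dx)^{1/p}. -/

import Mathlib

open Real MeasureTheory

lemma rpow_sublinear_of_convex {E : Type*} [AddCommGroup E] [Module ℝ E]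
    (p : ℝ) (hp : 1 < p) (g : E → ℝ) (hg0 : ∀ ξ, 0 ≤ g ξ)
    (hconv : ConvexOn ℝ Set.univ g)
    (hhom : ∀ t : ℝ, 0 < t → ∀ ξ, g (t • ξ) = t ^ p * g ξ)
    (ξ η : E) :
    g (ξ + η) ^ (1 / p) ≤ g ξ ^ (1 / p) + g η ^ (1 / p) := by
  have hp0 : (0:ℝ) < p := by linarith
  refine le_of_forall_pos_le_add fun ε hε => ?_
  set a := g ξ ^ (1 / p) + ε / 2 with ha_def
  set b := g η ^ (1 / p) + ε / 2 with hb_def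
  have ha : 0 < a := add_pos_of_nonneg_of_pos (Real.rpow_nonneg (hg0 ξ) _) (by positivity)
  have hb : 0 < b := add_pos_of_nonneg_of_pos (Real.rpow_nonneg (hg0 η) _) (by positivity)
  set c := a + b with hc_def
  have hc : 0 < c := by positivity
  set l := a / c with hl_def
  have hl : 0 < l := by positivity
  have hl1 : 1 - l = b / c := by
    rw [hl_def, eq_div_iff hc.ne', sub_mul, div_mul_cancel₀ _ hc.ne', hc_def]; ring
  have hl1' : 0 < 1 - l := by rw [hl1]; positivity
  have key := hconv.2 (Set.mem_univ (l⁻¹ • ξ)) (Set.mem_univ ((1 - l)⁻¹ • η))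
      hl.le hl1'.le (by ring)
  rw [smul_smul, smul_smul, mul_inv_cancel₀ hl.ne', mul_inv_cancel₀ hl1'.ne', one_smul,
    one_smul] at key
  have hscale : ∀ s : ℝ, 0 < s → ∀ v, g (s⁻¹ • v) = s ^ (-p) * g v := by
    intro s hs v
    rw [hhom s⁻¹ (by positivity) v, ← Real.rpow_neg_one s, ← Real.rpow_mul hs.le,
      neg_one_mul]
  -- bounds g ξ ≤ a^p, g η ≤ b^p
  have pow_inv : ∀ u : ℝ, 0 ≤ u → (u ^ (1/p)) ^ p = u := by
    intro u hu
    rw [← Real.rpow_mul hu, one_div_mul_cancel hp0.ne', Real.rpow_one]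
  have hgξ : g ξ ≤ a ^ p := by
    calc g ξ = (g ξ ^ (1/p)) ^ p := (pow_inv _ (hg0 ξ)).symm
      _ ≤ a ^ p := Real.rpow_le_rpow (Real.rpow_nonneg (hg0 ξ) _) (by linarith) hp0.le
  have hgη : g η ≤ b ^ p := by
    calc g η = (g η ^ (1/p)) ^ p := (pow_inv _ (hg0 η)).symm
      _ ≤ b ^ p := Real.rpow_le_rpow (Real.rpow_nonneg (hg0 η) _) (by linarith) hp0.le
  -- main combination
  have hmul : ∀ u : ℝ, 0 < u → u * u ^ (-p) = u ^ (1 - p) := by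
    intro u hu
    rw [show (1:ℝ) - p = 1 + -p by ring, Real.rpow_add hu, Real.rpow_one]
  have comb : ∀ u : ℝ, 0 < u → (u / c) ^ (1 - p) * u ^ p = u * c ^ (p - 1) := by
    intro u hu
    rw [Real.div_rpow hu.le hc.le, div_mul_eq_mul_div, ← Real.rpow_add hu,
      show 1 - p + p = 1 by ring, Real.rpow_one, show p - 1 = -(1 - p) by ring,
      Real.rpow_neg hc.le, div_eq_mul_inv]
  have key2 : g (ξ + η) ≤ c ^ p := by
    have h1 : l • g (l⁻¹ • ξ) ≤ a * c ^ (p - 1) := by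
      rw [smul_eq_mul, hscale l hl ξ, ← mul_assoc, hmul l hl]
      calc l ^ (1 - p) * g ξ ≤ l ^ (1 - p) * a ^ p :=
            mul_le_mul_of_nonneg_left hgξ (Real.rpow_nonneg hl.le _)
        _ = a * c ^ (p - 1) := by rw [hl_def]; exact comb a ha
    have h2 : (1 - l) • g ((1 - l)⁻¹ • η) ≤ b * c ^ (p - 1) := by
      rw [smul_eq_mul, hscale (1 - l) hl1' η, ← mul_assoc, hmul (1 - l) hl1']
      calc (1 - l) ^ (1 - p) * g η ≤ (1 - l) ^ (1 - p) * b ^ p :=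
            mul_le_mul_of_nonneg_left hgη (Real.rpow_nonneg hl1'.le _)
        _ = b * c ^ (p - 1) := by rw [hl1]; exact comb b hb
    have hcp : c ^ p = a * c ^ (p - 1) + b * c ^ (p - 1) := by
      rw [← add_mul, ← hc_def, show p = 1 + (p - 1) by ring, Real.rpow_add hc,
        Real.rpow_one]
      ring_nf
    rw [hcp]
    exact key.trans (add_le_add h1 h2)
  calc g (ξ + η) ^ (1/p) ≤ (c ^ p) ^ (1/p) :=
        Real.rpow_le_rpow (hg0 _) key2 (by positivity)
    _ = c := by rw [← Real.rpow_mul hc.le, mul_one_div_cancel hp0.ne', Real.rpow_one]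
    _ = g ξ ^ (1 / p) + g η ^ (1 / p) + ε := by rw [hc_def, ha_def, hb_def]; ring

/-- Integrated Minkowski inequality for a (p-1)-homogeneous operator with convex
energy, over a set Ω ⊂ ℝⁿ. -/
theorem integrated_minkowski {n : ℕ} (p : ℝ) (hp : 1 < p)
    (Ω : Set (EuclideanSpace ℝ (Fin n))) (hΩ : IsOpen Ω)
    (A : EuclideanSpace ℝ (Fin n) → EuclideanSpace ℝ (Fin n) → EuclideanSpace ℝ (Fin n))
    (Γ₁ Γ₂ : EuclideanSpace ℝ (Fin n) → EuclideanSpace ℝ (Fin n))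
    (hpos : ∀ x ξ, (0 : ℝ) ≤ inner ℝ (A x ξ) ξ)
    (hhom : ∀ x (t : ℝ) ξ, A x (t • ξ) = (|t| ^ (p - 2) * t) • A x ξ)
    (hconv : ∀ x, ConvexOn ℝ Set.univ fun ξ : EuclideanSpace ℝ (Fin n) => (inner ℝ (A x ξ) ξ : ℝ))
    (hi1 : IntegrableOn (fun x => (inner ℝ (A x (Γ₁ x)) (Γ₁ x) : ℝ)) Ω)
    (hi2 : IntegrableOn (fun x => (inner ℝ (A x (Γ₂ x)) (Γ₂ x) : ℝ)) Ω)
    (hi3 : IntegrableOn (fun x => (inner ℝ (A x (Γ₁ x + Γ₂ x)) (Γ₁ x + Γ₂ x) : ℝ)) Ω) :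
    (∫ x in Ω, (inner ℝ (A x (Γ₁ x + Γ₂ x)) (Γ₁ x + Γ₂ x) : ℝ)) ^ (1 / p)
      ≤ (∫ x in Ω, (inner ℝ (A x (Γ₁ x)) (Γ₁ x) : ℝ)) ^ (1 / p)
        + (∫ x in Ω, (inner ℝ (A x (Γ₂ x)) (Γ₂ x) : ℝ)) ^ (1 / p) := by
  have hp0 : (0:ℝ) < p := by linarith
  set E₁ : EuclideanSpace ℝ (Fin n) → ℝ := fun x => inner ℝ (A x (Γ₁ x)) (Γ₁ x) with hE₁
  set E₂ : EuclideanSpace ℝ (Fin n) → ℝ := fun x => inner ℝ (A x (Γ₂ x)) (Γ₂ x) with hE₂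
  set E₃ : EuclideanSpace ℝ (Fin n) → ℝ :=
    fun x => inner ℝ (A x (Γ₁ x + Γ₂ x)) (Γ₁ x + Γ₂ x) with hE₃
  -- pointwise sublinearity
  have hpt : ∀ x, E₃ x ^ (1/p) ≤ E₁ x ^ (1/p) + E₂ x ^ (1/p) := by
    intro x
    have homog : ∀ t : ℝ, 0 < t → ∀ ξ,
        (inner ℝ (A x (t • ξ)) (t • ξ) : ℝ) = t ^ p * inner ℝ (A x ξ) ξ := by
      intro t ht ξ
      rw [hhom x t ξ, real_inner_smul_left, real_inner_smul_right, abs_of_pos ht]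
      rw [show t ^ (p-2) * t * (t * (inner ℝ (A x ξ) ξ : ℝ))
          = (t ^ (p-2) * t ^ (2:ℕ)) * inner ℝ (A x ξ) ξ by push_cast; ring,
        ← Real.rpow_natCast t 2, ← Real.rpow_add ht]
      norm_num
    exact rpow_sublinear_of_convex p hp (fun ξ => (inner ℝ (A x ξ) ξ : ℝ)) (hpos x)
      (hconv x) homog (Γ₁ x) (Γ₂ x)
  set ν := (volume : Measure (EuclideanSpace ℝ (Fin n))).restrict Ω with hν
  set f₁ : EuclideanSpace ℝ (Fin n) → ENNReal := fun x => ENNReal.ofReal (E₁ x ^ (1/p)) with hf₁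
  set f₂ : EuclideanSpace ℝ (Fin n) → ENNReal := fun x => ENNReal.ofReal (E₂ x ^ (1/p)) with hf₂
  have hcont : Measurable fun u : ℝ => ENNReal.ofReal (u ^ (1/p)) :=
    ENNReal.measurable_ofReal.comp (Real.continuous_rpow_const (by positivity)).measurable
  have hmf1 : AEMeasurable f₁ ν :=
    hcont.comp_aemeasurable hi1.aestronglyMeasurable.aemeasurable
  have hmf2 : AEMeasurable f₂ ν :=
    hcont.comp_aemeasurable hi2.aestronglyMeasurable.aemeasurable
  have ofReal_rpow : ∀ u : ℝ, 0 ≤ u → ENNReal.ofReal (u ^ (1/p)) ^ p = ENNReal.ofReal u := by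
    intro u hu
    rw [ENNReal.ofReal_rpow_of_nonneg (Real.rpow_nonneg hu _) hp0.le,
      ← Real.rpow_mul hu, one_div_mul_cancel hp0.ne', Real.rpow_one]
  have step1 : ∫⁻ x, ENNReal.ofReal (E₃ x) ∂ν ≤ ∫⁻ x, (f₁ x + f₂ x) ^ p ∂ν := by
    refine lintegral_mono fun x => ?_
    rw [hf₁, hf₂, ← ENNReal.ofReal_add (Real.rpow_nonneg (hpos x _) _)
      (Real.rpow_nonneg (hpos x _) _)]
    calc ENNReal.ofReal (E₃ x)
        = ENNReal.ofReal (E₃ x ^ (1/p)) ^ p := (ofReal_rpow _ (hpos x _)).symm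
      _ ≤ ENNReal.ofReal (E₁ x ^ (1/p) + E₂ x ^ (1/p)) ^ p :=
          ENNReal.rpow_le_rpow (ENNReal.ofReal_le_ofReal (hpt x)) hp0.le
  have step2 := ENNReal.lintegral_Lp_add_le hmf1 hmf2 hp.le
  simp only [Pi.add_apply] at step2
  have int1 : ∫⁻ x, f₁ x ^ p ∂ν = ENNReal.ofReal (∫ x, E₁ x ∂ν) := by
    simp only [hf₁, ofReal_rpow _ (hpos _ _)]
    refine (lintegral_congr fun x => ofReal_rpow _ (hpos x (Γ₁ x))).trans ?_
    exact (ofReal_integral_eq_lintegral_ofReal hi1 (ae_of_all _ fun x => hpos x _)).symm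
  have int2 : ∫⁻ x, f₂ x ^ p ∂ν = ENNReal.ofReal (∫ x, E₂ x ∂ν) := by
    simp only [hf₂, ofReal_rpow _ (hpos _ _)]
    refine (lintegral_congr fun x => ofReal_rpow _ (hpos x (Γ₂ x))).trans ?_
    exact (ofReal_integral_eq_lintegral_ofReal hi2 (ae_of_all _ fun x => hpos x _)).symm
  have int3 : ∫⁻ x, ENNReal.ofReal (E₃ x) ∂ν = ENNReal.ofReal (∫ x, E₃ x ∂ν) :=
    (ofReal_integral_eq_lintegral_ofReal hi3 (ae_of_all _ fun x => hpos x _)).symm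
  have hI1 : 0 ≤ ∫ x, E₁ x ∂ν := integral_nonneg fun x => hpos x _
  have hI2 : 0 ≤ ∫ x, E₂ x ∂ν := integral_nonneg fun x => hpos x _
  have hI3 : 0 ≤ ∫ x, E₃ x ∂ν := integral_nonneg fun x => hpos x _
  have final : ENNReal.ofReal ((∫ x, E₃ x ∂ν) ^ (1/p))
      ≤ ENNReal.ofReal ((∫ x, E₁ x ∂ν) ^ (1/p) + (∫ x, E₂ x ∂ν) ^ (1/p)) := by
    rw [ENNReal.ofReal_add (Real.rpow_nonneg hI1 _) (Real.rpow_nonneg hI2 _),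
      ← ENNReal.ofReal_rpow_of_nonneg hI1 (by positivity : (0:ℝ) ≤ 1/p),
      ← ENNReal.ofReal_rpow_of_nonneg hI2 (by positivity : (0:ℝ) ≤ 1/p),
      ← ENNReal.ofReal_rpow_of_nonneg hI3 (by positivity : (0:ℝ) ≤ 1/p),
      ← int1, ← int2, ← int3]
    calc (∫⁻ x, ENNReal.ofReal (E₃ x) ∂ν) ^ (1/p)
        ≤ (∫⁻ x, (f₁ x + f₂ x) ^ p ∂ν) ^ (1/p) := ENNReal.rpow_le_rpow step1 (by positivity)
      _ ≤ (∫⁻ x, f₁ x ^ p ∂ν) ^ (1/p) + (∫⁻ x, f₂ x ^ p ∂ν) ^ (1/p) := step2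
  exact (ENNReal.ofReal_le_ofReal_iff
    (add_nonneg (Real.rpow_nonneg hI1 _) (Real.rpow_nonneg hI2 _))).mp final
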